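/- The regular thickening surface of the complete bipartite ribbon graph K_{p,q} (with cyclic orders induced by cyclic orders on the two vertex classes) has exactly gcd(p,q) boundary components and genus ((p-1)(q-1) - gcd(p,q) + 1)/2. -/

import Mathlib

/-!
STATEMENT 0. The complete bipartite ribbon graph `K_{p,q}` is encoded by its darts
(half-edges): a dart is a pair `((a, b), s)` with `a : ZMod p`, `b : ZMod q`,
where `s = true` means the half-edge of the edge `(a,b)` at the `A`-vertex `a`
and `s = false` the half-edge at the `B`-vertex `b`.  The cyclic orders on the
two vertex classes give the vertex rotation, and the boundary components of the
regular thickening are the orbits of the face permutation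
`φ = (vertex rotation) ∘ (edge involution)`, explicitly
`φ((a,b),true) = ((a+1,b),false)` and `φ((a,b),false) = ((a,b+1),true)`.
The theorem: the number of boundary components is `gcd p q`, and the genus `g`
determined by the Euler relation `V - E + F = 2 - 2g` equals
`((p-1)(q-1) - gcd(p,q) + 1)/2`. -/

/-- The face permutation of the ribbon graph `K_{p,q}`, acting on darts. -/
def facePerm (p q : ℕ) : Equiv.Perm ((ZMod p × ZMod q) × Bool) where
  toFun x := match x with
    | ((a, b), true) => ((a + 1, b), false)
    | ((a, b), false) => ((a, b + 1), true)
  invFun x := match x with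
    | ((a, b), false) => ((a - 1, b), true)
    | ((a, b), true) => ((a, b - 1), false)
  left_inv := by rintro ⟨⟨a, b⟩, (_ | _)⟩ <;> simp
  right_inv := by rintro ⟨⟨a, b⟩, (_ | _)⟩ <;> simp

/-- The set of boundary components of the thickening: orbits of the face
permutation, i.e. orbits of the action of the cyclic group generated by it. -/
def boundaryComponents (p q : ℕ) : Type :=
  MulAction.orbitRel.Quotient (Subgroup.zpowers (facePerm p q))
    ((ZMod p × ZMod q) × Bool)


def dartInv (p q : ℕ) (x : (ZMod p × ZMod q) × Bool) : ZMod (Nat.gcd p q) :=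
  ZMod.castHom (Nat.gcd_dvd_left p q) (ZMod (Nat.gcd p q)) x.1.1
    - ZMod.castHom (Nat.gcd_dvd_right p q) (ZMod (Nat.gcd p q)) x.1.2
    - (if x.2 then 0 else 1)

lemma dartInv_step (p q : ℕ) (x) : dartInv p q (facePerm p q x) = dartInv p q x := by
  rcases x with ⟨⟨a,b⟩, (_|_)⟩ <;>
    simp [dartInv, facePerm, Equiv.coe_fn_mk, map_add, map_one] <;> ring

lemma dartInv_zpow (p q : ℕ) (n : ℤ) :
    ∀ x, dartInv p q ((facePerm p q ^ n) x) = dartInv p q x := by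
  induction n using Int.induction_on with
  | zero => simp
  | succ n ih =>
    intro x
    rw [zpow_add_one, Equiv.Perm.mul_apply, ih, dartInv_step]
  | pred n ih =>
    intro x
    rw [zpow_sub_one, Equiv.Perm.mul_apply, ih]
    have := dartInv_step p q ((facePerm p q)⁻¹ x)
    rw [Equiv.Perm.coe_inv, Equiv.apply_symm_apply] at this
    exact this.symm

lemma facePerm_two_pow (p q : ℕ) (k : ℕ) :
    ∀ (a : ZMod p) (b : ZMod q),
     ((facePerm p q) ^ (2*k)) ((a,b),true) = ((a + k, b + k), true) := by
  induction k with
  | zero => intro a b; simp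
  | succ k ih =>
    intro a b
    have h : 2*(k+1) = 2*k + 2 := by ring
    rw [h, pow_add, Equiv.Perm.mul_apply]
    have h2 : ((facePerm p q) ^ 2) ((a,b),true) = ((a + 1, b + 1), true) := by
      rw [pow_two, Equiv.Perm.mul_apply]
      rfl
    rw [h2, ih]
    simp only [Prod.mk.injEq]
    refine ⟨⟨by push_cast; ring, by push_cast; ring⟩, trivial⟩

theorem thickening_of_Kpq_boundary_and_genus (p q : ℕ) (hp : 0 < p) (hq : 0 < q) :
    Nat.card (boundaryComponents p q) = Nat.gcd p q ∧
    ∀ g : ℚ, -- the genus, determined by the Euler relation V - E + F = 2 - 2g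
      ((p : ℚ) + q) - (p * q : ℚ) + Nat.card (boundaryComponents p q) = 2 - 2 * g →
      g = (((p : ℚ) - 1) * ((q : ℚ) - 1) - Nat.gcd p q + 1) / 2 := by
  haveI : NeZero p := ⟨hp.ne'⟩
  haveI : NeZero q := ⟨hq.ne'⟩
  haveI : NeZero (Nat.gcd p q) := ⟨(Nat.gcd_pos_of_pos_left q hp).ne'⟩
  have hlift : ∀ x y : (ZMod p × ZMod q) × Bool,
      (MulAction.orbitRel (Subgroup.zpowers (facePerm p q)) ((ZMod p × ZMod q) × Bool)).r x y →
      dartInv p q x = dartInv p q y := by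
    intro x y hxy
    obtain ⟨⟨g, hg⟩, hgx⟩ := hxy
    obtain ⟨n, rfl⟩ := Subgroup.mem_zpowers_iff.mp hg
    have h1 : x = (facePerm p q ^ n) y := hgx.symm
    rw [h1, dartInv_zpow]
  have hcard : Nat.card (boundaryComponents p q) = Nat.gcd p q := by
    have F : boundaryComponents p q → ZMod (Nat.gcd p q) :=
      Quotient.lift (dartInv p q) hlift
    have htrue : ∀ x : (ZMod p × ZMod q) × Bool, ∃ a b,
        (Quotient.mk _ x : boundaryComponents p q) = Quotient.mk _ ((a, b), true) := by
      rintro ⟨⟨a, b⟩, (_|_)⟩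
      · refine ⟨a, b + 1, (Quotient.sound ?_).symm⟩
        exact ⟨⟨facePerm p q, Subgroup.mem_zpowers _⟩, rfl⟩
      · exact ⟨a, b, rfl⟩
    have hinj : Function.Injective (Quotient.lift (dartInv p q) hlift :
        boundaryComponents p q → ZMod (Nat.gcd p q)) := by
      intro x y
      induction x using Quotient.inductionOn with | h x =>
      induction y using Quotient.inductionOn with | h y =>
      obtain ⟨a, b, hx⟩ := htrue x
      obtain ⟨a', b', hy⟩ := htrue y
      rw [hx, hy]
      intro hFeq
      have hf : dartInv p q ((a, b), true) = dartInv p q ((a', b'), true) := hFeq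
      simp only [dartInv, if_pos, sub_zero] at hf
      have hcongr : ((a - a').val : ZMod (Nat.gcd p q))
          = ((b - b').val : ZMod (Nat.gcd p q)) := by
        rw [ZMod.natCast_val, ZMod.natCast_val]
        have h2 : (ZMod.castHom (Nat.gcd_dvd_left p q) (ZMod (Nat.gcd p q)) (a - a'))
            = ZMod.castHom (Nat.gcd_dvd_right p q) (ZMod (Nat.gcd p q)) (b - b') := by
          rw [map_sub, map_sub]
          linear_combination hf
        simpa [ZMod.castHom_apply] using h2
      have hmod : (a - a').val ≡ (b - b').val [MOD Nat.gcd p q] :=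
        (ZMod.natCast_eq_natCast_iff _ _ _).mp hcongr
      obtain ⟨k, hk1, hk2⟩ := Nat.chineseRemainder' hmod
      have hka : (k : ZMod p) = a - a' := by
        rw [(ZMod.natCast_eq_natCast_iff _ _ _).mpr hk1, ZMod.natCast_val, ZMod.cast_id]
      have hkb : (k : ZMod q) = b - b' := by
        rw [(ZMod.natCast_eq_natCast_iff _ _ _).mpr hk2, ZMod.natCast_val, ZMod.cast_id]
      apply Quotient.sound
      refine ⟨⟨facePerm p q ^ (2 * k),
        Subgroup.pow_mem _ (Subgroup.mem_zpowers _) _⟩, ?_⟩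
      show (facePerm p q ^ (2 * k)) ((a', b'), true) = ((a, b), true)
      rw [facePerm_two_pow, hka, hkb]
      simp
    have hsurj : Function.Surjective (Quotient.lift (dartInv p q) hlift :
        boundaryComponents p q → ZMod (Nat.gcd p q)) := by
      intro c
      refine ⟨Quotient.mk _ (((c.val : ZMod p), 0), true), ?_⟩
      show dartInv p q (((c.val : ZMod p), 0), true) = c
      simp [dartInv, ZMod.natCast_val, ZMod.cast_id]
    have e : boundaryComponents p q ≃ ZMod (Nat.gcd p q) :=
      Equiv.ofBijective _ ⟨hinj, hsurj⟩
    rw [Nat.card_congr e, Nat.card_zmod]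
  refine ⟨hcard, ?_⟩
  intro g hg
  rw [hcard] at hg
  have hpq : (1:ℚ) ≤ p := by exact_mod_cast hp
  field_simp
  nlinarith [hg]
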